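/- Fix a ρ-slowly-moving reward-mean sequence μ, a temporal belief D, and an action a ∈ A with gap_{μ,D}(a) ≥ Δ. Set Δ̃ := Δ − 2ρ·Ψ_max(D) and assume Δ̃ > 0. Then for any sequence of recommendations I_1,…,I_T ∈ A, the D-weighted frequency of recommending a satisfies Σ_{t=1}^T D(t)·1[I_t = a] ≥ 1 − PReg_D(μ)/Δ̃. -/

import Mathlib

open Finset MeasureTheory ProbabilityTheory

noncomputable section

/-- A reward-mean sequence `μ` (with `μ t a` the mean reward of action `a` at time `t`)
is `ρ`-slowly-moving if consecutive mean vectors differ by at most `ρ` in sup-norm. -/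
def SlowlyMoving {T K : ℕ} (μ : Fin T → Fin K → ℝ) (ρ : ℝ) : Prop :=
  ∀ (t : Fin T) (ht : t.1 + 1 < T) (a : Fin K), |μ ⟨t.1 + 1, ht⟩ a - μ t a| ≤ ρ

/-- One-sided dispersion `Ψ_D(t) = E_{s∼D}|t-s|` of a temporal belief `D`. -/
def Psi {T : ℕ} (D : Fin T → ℝ) (t : Fin T) : ℝ :=
  ∑ s : Fin T, D s * |(t.1 : ℝ) - (s.1 : ℝ)|

/-- Max dispersion `Ψ_max(D)`: the supremum of `Ψ_D` over the smallest interval of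
time steps containing the support of `D`. -/
def PsiMax {T : ℕ} (D : Fin T → ℝ) : ℝ :=
  sSup (Psi D '' {t | ∃ t₁ t₂ : Fin T, D t₁ ≠ 0 ∧ D t₂ ≠ 0 ∧ t₁ ≤ t ∧ t ≤ t₂})

/-- Mean dispersion `Φ(D) = E_{s,t∼D}|s-t|`. -/
def PhiD {T : ℕ} (D : Fin T → ℝ) : ℝ :=
  ∑ s : Fin T, ∑ t : Fin T, D s * D t * |(s.1 : ℝ) - (t.1 : ℝ)|

/-- `W₂(D) = Σ_t D(t)²`. -/
def W2 {T : ℕ} (D : Fin T → ℝ) : ℝ := ∑ t : Fin T, (D t) ^ 2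

lemma univ_ne {K : ℕ} (hK : 2 ≤ K) : (univ : Finset (Fin K)).Nonempty :=
  ⟨⟨0, by omega⟩, mem_univ _⟩

lemma erase_ne {K : ℕ} (hK : 2 ≤ K) (a : Fin K) :
    ((univ : Finset (Fin K)).erase a).Nonempty := by
  rw [← Finset.card_pos, Finset.card_erase_of_mem (mem_univ a), Finset.card_univ,
    Fintype.card_fin]
  omega

/-- `gap_{μ,D}(a) = min_{b ≠ a} Σ_t D(t)(μ_{t,a} - μ_{t,b})`. -/
def gap {T K : ℕ} (hK : 2 ≤ K) (D : Fin T → ℝ) (μ : Fin T → Fin K → ℝ) (a : Fin K) : ℝ :=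
  ((univ : Finset (Fin K)).erase a).inf' (erase_ne hK a)
    (fun b => ∑ t : Fin T, D t * (μ t a - μ t b))

/-- `D`-weighted external regret of the recommendation sequence `I` on rewards `u`:
`max_{a} Σ_t D(t)(u_{t,a} - u_{t,I_t})`.  (Taking `u := μ` gives pseudo-regret.) -/
def extReg {T K : ℕ} (hK : 2 ≤ K) (D : Fin T → ℝ) (I : Fin T → Fin K)
    (u : Fin T → Fin K → ℝ) : ℝ :=
  (univ : Finset (Fin K)).sup' (univ_ne hK) (fun a => ∑ t : Fin T, D t * (u t a - u t (I t)))

/-- `D`-weighted swap regret: `max_{φ : A → A} Σ_t D(t)(u_{t,φ(I_t)} - u_{t,I_t})`. -/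
def swapReg {T K : ℕ} (D : Fin T → ℝ) (I : Fin T → Fin K)
    (u : Fin T → Fin K → ℝ) : ℝ :=
  (univ : Finset (Fin K → Fin K)).sup' ⟨id, mem_univ _⟩
    (fun φ => ∑ t : Fin T, D t * (u t (φ (I t)) - u t (I t)))

end

lemma lip_aux {T K : ℕ} {μ : Fin T → Fin K → ℝ} {ρ : ℝ} (h : SlowlyMoving μ ρ) :
    ∀ (n : ℕ) (s : Fin T) (hn : s.1 + n < T) (c : Fin K),
      |μ ⟨s.1 + n, hn⟩ c - μ s c| ≤ ρ * n := by
  intro n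
  induction n with
  | zero =>
    intro s hn c
    have : (⟨s.1 + 0, hn⟩ : Fin T) = s := Fin.ext (show s.1 + 0 = s.1 by omega)
    rw [this]
    simp
  | succ n ih =>
    intro s hn c
    have hn' : s.1 + n < T := by omega
    have h1 := h ⟨s.1 + n, hn'⟩ (by show s.1 + n + 1 < T; omega) c
    have h2 := ih s hn' c
    have heq : (⟨(⟨s.1 + n, hn'⟩ : Fin T).1 + 1, by show s.1 + n + 1 < T; omega⟩ : Fin T)
        = ⟨s.1 + (n + 1), hn⟩ := Fin.ext (by simp; omega)
    rw [heq] at h1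
    have htri := abs_sub_le (μ ⟨s.1 + (n + 1), hn⟩ c) (μ ⟨s.1 + n, hn'⟩ c) (μ s c)
    push_cast
    linarith

lemma lip {T K : ℕ} {μ : Fin T → Fin K → ℝ} {ρ : ℝ} (h : SlowlyMoving μ ρ)
    (s t : Fin T) (c : Fin K) : |μ t c - μ s c| ≤ ρ * |(t.1 : ℝ) - (s.1 : ℝ)| := by
  rcases le_total s.1 t.1 with hle | hle
  · have := lip_aux h (t.1 - s.1) s (by omega) c
    have ht : (⟨s.1 + (t.1 - s.1), by omega⟩ : Fin T) = t := Fin.ext (show s.1 + (t.1 - s.1) = t.1 by omega)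
    rw [ht] at this
    have habs : |(t.1 : ℝ) - (s.1 : ℝ)| = ((t.1 - s.1 : ℕ) : ℝ) := by
      rw [abs_of_nonneg (sub_nonneg.mpr (by exact_mod_cast hle))]
      push_cast [hle]; ring
    rw [habs]; exact this
  · have := lip_aux h (s.1 - t.1) t (by omega) c
    have ht : (⟨t.1 + (s.1 - t.1), by omega⟩ : Fin T) = s := Fin.ext (show t.1 + (s.1 - t.1) = s.1 by omega)
    rw [ht] at this
    have habs : |(t.1 : ℝ) - (s.1 : ℝ)| = ((s.1 - t.1 : ℕ) : ℝ) := by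
      rw [abs_sub_comm, abs_of_nonneg (sub_nonneg.mpr (by exact_mod_cast hle))]
      push_cast [hle]; ring
    rw [habs, abs_sub_comm]; exact this

/-- If gap_{μ,D}(a) ≥ Δ and Δ̃ := Δ − 2ρ·Ψ_max(D) > 0, then for any
recommendation sequence I, the D-weighted frequency of recommending a satisfies
Σ_t D(t)·1[I_t = a] ≥ 1 − PReg_D(μ)/Δ̃. -/
theorem stmt7 {T K : ℕ} (hK : 2 ≤ K) (ρ Δ : ℝ)
    (μ : Fin T → Fin K → ℝ) (hμ : ∀ t a, μ t a ∈ Set.Icc (0 : ℝ) 1)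
    (hslow : SlowlyMoving μ ρ)
    (D : Fin T → ℝ) (hD0 : ∀ t, 0 ≤ D t) (hD1 : ∑ t, D t = 1)
    (a : Fin K) (hgap : gap hK D μ a ≥ Δ)
    (hΔ : 0 < Δ - 2 * ρ * PsiMax D)
    (I : Fin T → Fin K) :
    ∑ t : Fin T, D t * (if I t = a then (1 : ℝ) else 0)
      ≥ 1 - extReg hK D I μ / (Δ - 2 * ρ * PsiMax D) := by
  set Δ' := Δ - 2 * ρ * PsiMax D with hΔ'def
  -- key pointwise bound
  have key : ∀ t : Fin T, D t ≠ 0 → ∀ b : Fin K, b ≠ a → Δ' ≤ μ t a - μ t b := by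
    intro t ht b hb
    -- gap bound
    have h1 : Δ ≤ ∑ s : Fin T, D s * (μ s a - μ s b) := by
      have := Finset.inf'_le (s := (univ : Finset (Fin K)).erase a)
        (fun b => ∑ s : Fin T, D s * (μ s a - μ s b))
        (Finset.mem_erase.mpr ⟨hb, mem_univ b⟩)
      exact le_trans hgap this
    -- slow-moving bound
    have h2 : ∑ s : Fin T, D s * (μ s a - μ s b) ≤ (μ t a - μ t b) + 2 * ρ * Psi D t := by
      have hterm : ∀ s : Fin T, D s * (μ s a - μ s b)
          ≤ D s * (μ t a - μ t b) + 2 * ρ * (D s * |(t.1 : ℝ) - (s.1 : ℝ)|) := by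
        intro s
        have ha' := lip hslow t s a
        have hb' := lip hslow t s b
        have habs := abs_le.mp ha'
        have habs' := abs_le.mp hb'
        have hbound : (μ s a - μ s b) ≤ (μ t a - μ t b) + 2 * (ρ * |(s.1 : ℝ) - (t.1 : ℝ)|) := by
          linarith [habs.1, habs.2, habs'.1, habs'.2]
        have hD := hD0 s
        have := mul_le_mul_of_nonneg_left hbound hD
        rw [abs_sub_comm] at this
        nlinarith [this]
      calc ∑ s : Fin T, D s * (μ s a - μ s b)
          ≤ ∑ s : Fin T, (D s * (μ t a - μ t b) + 2 * ρ * (D s * |(t.1 : ℝ) - (s.1 : ℝ)|)) :=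
            Finset.sum_le_sum (fun s _ => hterm s)
        _ = (μ t a - μ t b) + 2 * ρ * Psi D t := by
            rw [Finset.sum_add_distrib, ← Finset.sum_mul, hD1, one_mul, ← Finset.mul_sum, Psi]
    -- dispersion bound
    have h3 : ρ * Psi D t ≤ ρ * PsiMax D := by
      rcases Nat.lt_or_ge T 2 with hT | hT
      · -- T = 1
        have hT1 : T = 1 := by have := t.2; omega
        have hz : ∀ x : Fin T, x.1 = 0 := by intro x; have := x.2; omega
        have hpsi0 : ∀ x : Fin T, Psi D x = 0 := by
          intro x
          unfold Psi
          apply Finset.sum_eq_zero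
          intro s _
          rw [hz x, hz s]
          simp
        have hSmem : t ∈ {x | ∃ t₁ t₂ : Fin T, D t₁ ≠ 0 ∧ D t₂ ≠ 0 ∧ t₁ ≤ x ∧ x ≤ t₂} :=
          ⟨t, t, ht, ht, le_refl t, le_refl t⟩
        have hmax0 : PsiMax D = 0 := by
          have hne : (Psi D '' {x | ∃ t₁ t₂ : Fin T, D t₁ ≠ 0 ∧ D t₂ ≠ 0 ∧ t₁ ≤ x ∧ x ≤ t₂}).Nonempty :=
            ⟨Psi D t, t, hSmem, rfl⟩
          have hle : PsiMax D ≤ 0 :=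
            csSup_le hne (by rintro x ⟨y, _, rfl⟩; exact le_of_eq (hpsi0 y))
          have hge : Psi D t ≤ PsiMax D :=
            le_csSup ((Set.toFinite _).image _).bddAbove ⟨t, hSmem, rfl⟩
          rw [hpsi0 t] at hge
          linarith
        rw [hpsi0 t, hmax0]
      · -- T ≥ 2 : ρ ≥ 0
        have hρ : 0 ≤ ρ := by
          have := hslow ⟨0, by omega⟩ (show 0 + 1 < T by omega) a
          exact le_trans (abs_nonneg _) this
        have hPsi : Psi D t ≤ PsiMax D :=
          le_csSup ((Set.toFinite _).image _).bddAbove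
            ⟨t, ⟨t, t, ht, ht, le_refl t, le_refl t⟩, rfl⟩
        exact mul_le_mul_of_nonneg_left hPsi hρ
    linarith
  -- main chain
  set p := ∑ t : Fin T, D t * (if I t = a then (1 : ℝ) else 0) with hp
  have hsum : (1 - p) * Δ' ≤ ∑ t : Fin T, D t * (μ t a - μ t (I t)) := by
    have h1p : 1 - p = ∑ t : Fin T, D t * (1 - (if I t = a then (1 : ℝ) else 0)) := by
      have e1 : ∑ t : Fin T, D t * (1 - (if I t = a then (1 : ℝ) else 0))
          = ∑ t : Fin T, (D t - D t * (if I t = a then (1 : ℝ) else 0)) :=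
        Finset.sum_congr rfl (fun t _ => by ring)
      rw [e1, Finset.sum_sub_distrib, hD1, hp]
    rw [h1p, Finset.sum_mul]
    apply Finset.sum_le_sum
    intro t _
    by_cases hIt : I t = a
    · simp [hIt]
    · simp only [if_neg hIt]
      rcases eq_or_ne (D t) 0 with hDt | hDt
      · simp [hDt]
      · have hk := key t hDt (I t) hIt
        have := mul_le_mul_of_nonneg_left hk (hD0 t)
        nlinarith [this]
  have hR : ∑ t : Fin T, D t * (μ t a - μ t (I t)) ≤ extReg hK D I μ :=
    Finset.le_sup' (fun a => ∑ t : Fin T, D t * (μ t a - μ t (I t))) (mem_univ a)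
  have hfin : (1 - p) * Δ' ≤ extReg hK D I μ := le_trans hsum hR
  have : 1 - p ≤ extReg hK D I μ / Δ' := (le_div_iff₀ hΔ).mpr hfin
  linarith
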